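/- arXiv:1605.09107 — 4 statements merged into one kernel-verified Lean document; each statement's English description precedes it below -/
import Mathlib

section
/- Let β : ℕ → ℝ satisfy |β_u - Ξ| ≤ Δ for all u, where Ξ ∈ ℝ and 0 ≤ Δ ≤ π/2. Define g_t = exp(i ∑_{u=1}^t β_u). Then for every integer τ ≥ 0 with τΔ < π/2 and every N > τ, |(1/N) ∑_{t=0}^{N-1-τ} conj(g_t) g_{t+τ}| ≥ (1 - τ/N) cos(τΔ). -/
open Complex Real Finset

theorem stmt_6 (β : ℕ → ℝ) (Ξ Δ : ℝ) (hΔ0 : 0 ≤ Δ) (hΔπ : Δ ≤ Real.pi / 2)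
    (hβ : ∀ u, |β u - Ξ| ≤ Δ)
    (g : ℕ → ℂ) (hg : ∀ t, g t = Complex.exp (Complex.I * ∑ u ∈ Finset.Icc 1 t, β u))
    (τ : ℕ) (hτ : (τ : ℝ) * Δ < Real.pi / 2) (N : ℕ) (hN : τ < N) :
    ‖(1 / (N : ℂ)) * ∑ t ∈ Finset.range (N - τ),
        (starRingEnd ℂ) (g t) * g (t + τ)‖
      ≥ (1 - (τ : ℝ) / N) * Real.cos ((τ : ℝ) * Δ) := by
  set S : ℕ → ℝ := fun t => ∑ u ∈ Finset.Icc (t+1) (t+τ), β u with hS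
  have key : ∀ t, (starRingEnd ℂ) (g t) * g (t + τ)
      = Complex.exp (Complex.I * (S t : ℝ)) := by
    intro t
    rw [hg, hg, ← Complex.exp_conj, ← Complex.exp_add]
    congr 1
    rw [map_mul, Complex.conj_I]
    have hc : (starRingEnd ℂ) ((∑ u ∈ Finset.Icc 1 t, β u : ℝ) : ℂ)
        = ((∑ u ∈ Finset.Icc 1 t, β u : ℝ) : ℂ) := Complex.conj_ofReal _
    rw [hc]
    have hsplit : (∑ u ∈ Finset.Icc 1 t, β u) + S t = ∑ u ∈ Finset.Icc 1 (t+τ), β u := by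
      have h1 : Finset.Icc 1 t = Finset.Ioc 0 t := by
        ext x; simp [Nat.lt_iff_add_one_le]
      have h2 : Finset.Icc (t+1) (t+τ) = Finset.Ioc t (t+τ) := by
        ext x; simp only [Finset.mem_Icc, Finset.mem_Ioc]; omega
      have h3 : Finset.Icc 1 (t+τ) = Finset.Ioc 0 (t+τ) := by
        ext x; simp [Nat.lt_iff_add_one_le]
      rw [hS]; simp only [h1, h2, h3]
      exact Finset.sum_Ioc_consecutive _ (Nat.zero_le t) (Nat.le_add_right t τ)
    have h4 : S t = (∑ u ∈ Finset.Icc 1 (t+τ), β u) - ∑ u ∈ Finset.Icc 1 t, β u := by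
      linarith
    have : (S t : ℂ) = ((∑ u ∈ Finset.Icc 1 (t+τ), β u : ℝ) : ℂ)
        - ((∑ u ∈ Finset.Icc 1 t, β u : ℝ) : ℂ) := by
      rw [h4]; push_cast; ring
    rw [this]; ring
  -- bound on deviation
  set θ : ℕ → ℝ := fun t => S t - τ * Ξ with hθ
  have hθbound : ∀ t, |θ t| ≤ τ * Δ := by
    intro t
    have : θ t = ∑ u ∈ Finset.Icc (t+1) (t+τ), (β u - Ξ) := by
      rw [hθ, hS]
      simp [Finset.sum_sub_distrib, Finset.Icc_add_one_left_eq_Ioc, mul_comm]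
    rw [this]
    calc |∑ u ∈ Finset.Icc (t+1) (t+τ), (β u - Ξ)|
        ≤ ∑ u ∈ Finset.Icc (t+1) (t+τ), |β u - Ξ| := Finset.abs_sum_le_sum_abs _ _
      _ ≤ ∑ u ∈ Finset.Icc (t+1) (t+τ), Δ := Finset.sum_le_sum (fun u _ => hβ u)
      _ = τ * Δ := by
          rw [Finset.sum_const, Finset.Icc_add_one_left_eq_Ioc, Nat.card_Ioc]
          simp [mul_comm]
  have hcos : ∀ t, Real.cos (τ * Δ) ≤ Real.cos (θ t) := by
    intro t
    rw [← Real.cos_abs (θ t)]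
    apply Real.cos_le_cos_of_nonneg_of_le_pi (abs_nonneg _)
      (by nlinarith [Real.pi_pos]) (hθbound t)
  set z : ℂ := ∑ t ∈ Finset.range (N - τ), (starRingEnd ℂ) (g t) * g (t + τ) with hz
  have hre : ((N - τ : ℕ) : ℝ) * Real.cos (τ * Δ)
      ≤ (Complex.exp (-Complex.I * ((τ * Ξ : ℝ) : ℂ)) * z).re := by
    rw [hz, Finset.mul_sum]
    rw [Complex.re_sum]
    have heach : ∀ t ∈ Finset.range (N - τ),
        (Complex.exp (-Complex.I * ((τ * Ξ : ℝ) : ℂ)) *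
          ((starRingEnd ℂ) (g t) * g (t + τ))).re = Real.cos (θ t) := by
      intro t _
      rw [key t, ← Complex.exp_add]
      have : -Complex.I * ((τ * Ξ : ℝ) : ℂ) + Complex.I * (S t : ℝ)
          = (θ t : ℝ) * Complex.I := by
        rw [hθ]; push_cast; ring
      rw [this, Complex.exp_mul_I]
      simp [Complex.cos_ofReal_re]
    rw [Finset.sum_congr rfl heach]
    calc ((N - τ : ℕ) : ℝ) * Real.cos (τ * Δ)
        = ∑ _t ∈ Finset.range (N - τ), Real.cos (τ * Δ) := by
          rw [Finset.sum_const]; simp [mul_comm]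
      _ ≤ ∑ t ∈ Finset.range (N - τ), Real.cos (θ t) :=
          Finset.sum_le_sum (fun t _ => hcos t)
  have habs : ((N - τ : ℕ) : ℝ) * Real.cos (τ * Δ) ≤ ‖z‖ := by
    calc ((N - τ : ℕ) : ℝ) * Real.cos (τ * Δ)
        ≤ (Complex.exp (-Complex.I * ((τ * Ξ : ℝ) : ℂ)) * z).re := hre
      _ ≤ ‖Complex.exp (-Complex.I * ((τ * Ξ : ℝ) : ℂ)) * z‖ :=
          Complex.re_le_norm _
      _ = ‖z‖ := by
          rw [norm_mul]
          have : ‖Complex.exp (-Complex.I * ((τ * Ξ : ℝ) : ℂ))‖ = 1 := by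
            rw [Complex.norm_exp]
            simp
          rw [this, one_mul]
  have hN0 : (0 : ℝ) < N := by exact_mod_cast Nat.lt_of_le_of_lt (Nat.zero_le τ) hN
  rw [norm_mul]
  have h1N : ‖(1 / (N : ℂ))‖ = 1 / N := by
    rw [norm_div]; simp
  rw [h1N]
  rw [ge_iff_le]
  have hcast : ((N - τ : ℕ) : ℝ) = (N : ℝ) - τ := by
    rw [Nat.cast_sub hN.le]
  calc (1 - (τ : ℝ) / N) * Real.cos (τ * Δ)
      = (1 / N) * (((N : ℝ) - τ) * Real.cos (τ * Δ)) := by field_simp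
    _ ≤ (1 / N) * ‖z‖ := by
        apply mul_le_mul_of_nonneg_left _ (by positivity)
        rw [← hcast]; exact habs
end

section
/- Let β : ℕ → ℝ satisfy |β_u - Ξ| ≤ Δ with 0 ≤ Δ ≤ π/2, let g_t = exp(i ∑_{u=1}^t β_u), and let τ ≥ 0 be an integer with τΔ < π/2. Then liminf_{N→∞} |(1/N) ∑_{t=0}^{N-1-τ} conj(g_t) g_{t+τ}| ≥ cos(τΔ) > 0. -/
open Complex Real Finset Filter

theorem stmt_7 (β : ℕ → ℝ) (Ξ Δ : ℝ) (hΔ0 : 0 ≤ Δ) (hΔπ : Δ ≤ Real.pi / 2)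
    (hβ : ∀ u, |β u - Ξ| ≤ Δ)
    (g : ℕ → ℂ) (hg : ∀ t, g t = Complex.exp (Complex.I * ∑ u ∈ Finset.Icc 1 t, β u))
    (τ : ℕ) (hτ : (τ : ℝ) * Δ < Real.pi / 2) :
    Filter.atTop.liminf (fun N : ℕ =>
        ‖(1 / (N : ℂ)) * ∑ t ∈ Finset.range (N - τ),
          (starRingEnd ℂ) (g t) * g (t + τ)‖)
      ≥ Real.cos ((τ : ℝ) * Δ) ∧ 0 < Real.cos ((τ : ℝ) * Δ) := by
  set c : ℝ := Real.cos ((τ : ℝ) * Δ) with hc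
  have hτΔ0 : 0 ≤ (τ : ℝ) * Δ := mul_nonneg (Nat.cast_nonneg τ) hΔ0
  have hcpos : 0 < c := by
    apply Real.cos_pos_of_mem_Ioo
    constructor
    · linarith [Real.pi_pos]
    · exact hτ
  refine ⟨?_, hcpos⟩
  set A : ℕ → ℝ := fun t => ∑ u ∈ Finset.Icc 1 t, β u with hA
  have hgA : ∀ t, g t = Complex.exp ((A t : ℂ) * Complex.I) := by
    intro t
    rw [hg t]
    congr 1
    push_cast [hA]
    ring
  -- the product formula
  have hprod : ∀ t, (starRingEnd ℂ) (g t) * g (t + τ) =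
      Complex.exp (((A (t + τ) - A t : ℝ) : ℂ) * Complex.I) := by
    intro t
    rw [hgA t, hgA (t + τ), ← Complex.exp_conj, ← Complex.exp_add]
    congr 1
    simp [Complex.conj_ofReal]
    push_cast
    ring
  -- phase difference bound
  have hAdiff : ∀ t, A (t + τ) - A t = ∑ u ∈ Finset.Ioc t (t + τ), β u := by
    intro t
    have h1 : ∀ m, A m = ∑ u ∈ Finset.Ioc 0 m, β u := by
      intro m
      rw [hA]
      exact Finset.sum_congr (by rw [← Finset.Icc_add_one_left_eq_Ioc, zero_add]) (fun _ _ => rfl)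
    rw [h1, h1]
    have := Finset.sum_Ioc_consecutive (fun u => β u) (Nat.zero_le t) (Nat.le_add_right t τ)
    linarith [this]
  have hbound : ∀ t, |A (t + τ) - A t - (τ : ℝ) * Ξ| ≤ (τ : ℝ) * Δ := by
    intro t
    rw [hAdiff t]
    have hcard : (Finset.Ioc t (t + τ)).card = τ := by
      rw [Nat.card_Ioc]; omega
    have : (τ : ℝ) * Ξ = ∑ u ∈ Finset.Ioc t (t + τ), Ξ := by
      rw [Finset.sum_const, hcard, nsmul_eq_mul]
    rw [this, ← Finset.sum_sub_distrib]
    calc |∑ u ∈ Finset.Ioc t (t + τ), (β u - Ξ)|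
        ≤ ∑ u ∈ Finset.Ioc t (t + τ), |β u - Ξ| := Finset.abs_sum_le_sum_abs _ _
      _ ≤ ∑ u ∈ Finset.Ioc t (t + τ), Δ := Finset.sum_le_sum (fun u _ => hβ u)
      _ = (τ : ℝ) * Δ := by rw [Finset.sum_const, hcard, nsmul_eq_mul]
  -- real part bound after rotation
  set w : ℂ := Complex.exp (((-((τ : ℝ) * Ξ) : ℝ) : ℂ) * Complex.I) with hw
  have hRe : ∀ t, c ≤ (w * ((starRingEnd ℂ) (g t) * g (t + τ))).re := by
    intro t
    rw [hprod t, hw, ← Complex.exp_add]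
    have : ((-((τ : ℝ) * Ξ) : ℝ) : ℂ) * Complex.I +
        ((A (t + τ) - A t : ℝ) : ℂ) * Complex.I =
        ((A (t + τ) - A t - (τ : ℝ) * Ξ : ℝ) : ℂ) * Complex.I := by
      push_cast; ring
    rw [this, Complex.exp_ofReal_mul_I_re]
    set θ := A (t + τ) - A t - (τ : ℝ) * Ξ with hθ
    have hθb : |θ| ≤ (τ : ℝ) * Δ := hbound t
    calc c ≤ Real.cos |θ| := by
            apply Real.cos_le_cos_of_nonneg_of_le_pi (abs_nonneg θ) _ hθb
            linarith [Real.pi_pos]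
      _ = Real.cos θ := Real.cos_abs θ
  -- sum bound
  have hsum : ∀ N : ℕ, ((N - τ : ℕ) : ℝ) * c ≤
      ‖∑ t ∈ Finset.range (N - τ), (starRingEnd ℂ) (g t) * g (t + τ)‖ := by
    intro N
    set S := ∑ t ∈ Finset.range (N - τ), (starRingEnd ℂ) (g t) * g (t + τ) with hS
    have habsw : ‖w‖ = 1 := by
      rw [hw]; exact Complex.norm_exp_ofReal_mul_I _
    have h1 : (w * S).re ≤ ‖S‖ := by
      calc (w * S).re ≤ ‖w * S‖ := Complex.re_le_norm _
        _ = ‖w‖ * ‖S‖ := norm_mul _ _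
        _ = ‖S‖ := by rw [habsw, one_mul]
    have h2 : ((N - τ : ℕ) : ℝ) * c ≤ (w * S).re := by
      rw [hS, Finset.mul_sum, Complex.re_sum]
      have := Finset.card_nsmul_le_sum (Finset.range (N - τ))
        (fun t => (w * ((starRingEnd ℂ) (g t) * g (t + τ))).re) c
        (fun t _ => hRe t)
      rw [Finset.card_range, nsmul_eq_mul] at this
      exact this
    linarith
  -- lower bound function
  set h : ℕ → ℝ := fun N => ((N - τ : ℕ) : ℝ) / (N : ℝ) * c with hhdef
  set f : ℕ → ℝ := fun N => ‖(1 / (N : ℂ)) * ∑ t ∈ Finset.range (N - τ),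
      (starRingEnd ℂ) (g t) * g (t + τ)‖ with hfdef
  have hfh : ∀ N, h N ≤ f N := by
    intro N
    have : f N = (1 / (N : ℝ)) * ‖∑ t ∈ Finset.range (N - τ),
        (starRingEnd ℂ) (g t) * g (t + τ)‖ := by
      rw [hfdef]
      simp only [norm_mul, norm_div, norm_one, Complex.norm_natCast]
    rw [this, hhdef]
    have h0 : (0 : ℝ) ≤ 1 / (N : ℝ) := by positivity
    calc ((N - τ : ℕ) : ℝ) / (N : ℝ) * c = (1 / (N : ℝ)) * (((N - τ : ℕ) : ℝ) * c) := by ring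
      _ ≤ (1 / (N : ℝ)) * ‖∑ t ∈ Finset.range (N - τ),
            (starRingEnd ℂ) (g t) * g (t + τ)‖ := mul_le_mul_of_nonneg_left (hsum N) h0
  -- h tends to c
  have htend : Tendsto h atTop (nhds c) := by
    have h1 : Tendsto (fun N : ℕ => (1 - (τ : ℝ) / N) * c) atTop (nhds c) := by
      have := (tendsto_const_div_atTop_nhds_zero_nat (τ : ℝ)).const_sub 1
      have h2 := this.mul_const c
      simpa using h2
    apply h1.congr'
    filter_upwards [Filter.eventually_ge_atTop (τ + 1)] with N hN
    have hNτ : τ ≤ N := by omega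
    have hNpos : (0 : ℝ) < N := by exact_mod_cast Nat.lt_of_lt_of_le (Nat.succ_pos τ) hN
    show (1 - (τ : ℝ) / N) * c = ((N - τ : ℕ) : ℝ) / (N : ℝ) * c
    rw [Nat.cast_sub hNτ]
    field_simp
  have hfbdd : Filter.IsBoundedUnder (· ≤ ·) Filter.atTop f := by
    apply Filter.isBoundedUnder_of
    refine ⟨1, fun N => ?_⟩
    show f N ≤ 1
    rw [hfdef]
    simp only [norm_mul, norm_div, norm_one, Complex.norm_natCast]
    rcases Nat.eq_zero_or_pos N with h0 | hpos
    · subst h0; simp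
    · have hNpos : (0 : ℝ) < N := by exact_mod_cast hpos
      have habs : ‖∑ t ∈ Finset.range (N - τ),
          (starRingEnd ℂ) (g t) * g (t + τ)‖ ≤ (N : ℝ) := by
        calc ‖∑ t ∈ Finset.range (N - τ), (starRingEnd ℂ) (g t) * g (t + τ)‖
            ≤ ∑ t ∈ Finset.range (N - τ), ‖(starRingEnd ℂ) (g t) * g (t + τ)‖ := by
              exact norm_sum_le _ _
          _ ≤ ∑ t ∈ Finset.range (N - τ), 1 := by
              apply Finset.sum_le_sum
              intro t _
              rw [norm_mul]
              have h1 : ‖(starRingEnd ℂ) (g t)‖ = 1 := by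
                rw [Complex.norm_conj, hgA t, Complex.norm_exp_ofReal_mul_I]
              have h2 : ‖g (t + τ)‖ = 1 := by
                rw [hgA (t + τ), Complex.norm_exp_ofReal_mul_I]
              rw [h1, h2, one_mul]
          _ = ((N - τ : ℕ) : ℝ) := by simp
          _ ≤ (N : ℝ) := by exact_mod_cast Nat.sub_le N τ
      rw [div_mul_eq_mul_div, one_mul, div_le_one hNpos]
      exact habs
  have hhbdd : Filter.IsBoundedUnder (· ≥ ·) Filter.atTop h :=
    htend.isBoundedUnder_ge
  have hliminf : Filter.liminf h Filter.atTop ≤ Filter.liminf f Filter.atTop :=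
    Filter.liminf_le_liminf (Filter.Eventually.of_forall hfh) hhbdd
      hfbdd.isCoboundedUnder_ge
  have hhlim : Filter.liminf h Filter.atTop = c := htend.liminf_eq
  rw [ge_iff_le, ← hhlim]
  exact hliminf
end

section
/- Let N ≥ 2, γ ∈ ℝ, Δ ∈ (0, π), and define β_t = γ + Δ(2t - (N-1))/(2(N-1)) for t = 0,...,N-1, and g_t = exp(i ∑_{u=1}^t β_u). Then for every integer τ with 1 ≤ τ ≤ N-1 such that sin(Δτ/(2(N-1))) ≠ 0, (1/N) ∑_{t=0}^{N-1-τ} conj(g_t) g_{t+τ} = [sin(Δτ(N-τ)/(2(N-1))) / (N sin(Δτ/(2(N-1))))] · exp(i(γτ + Δτ/(2(N-1)))). -/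
open Complex Real Finset

lemma exp_two_I_aux (z : ℂ) :
    Complex.exp (2*Complex.I*z) - 1 = Complex.exp (Complex.I*z) * (2*Complex.I*Complex.sin z) := by
  rw [Complex.sin]
  have h : (2:ℂ)*Complex.I*z = Complex.I*z + Complex.I*z := by ring
  rw [h, Complex.exp_add]
  have e1 : -z*Complex.I = -(Complex.I*z) := by ring
  have e2 : z*Complex.I = Complex.I*z := by ring
  rw [e1, e2, Complex.exp_neg]
  have hne : Complex.exp (Complex.I*z) ≠ 0 := Complex.exp_ne_zero _
  have hI : (Complex.I:ℂ)^2 = -1 := Complex.I_sq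
  field_simp
  linear_combination (Complex.exp (Complex.I*z)*Complex.exp (Complex.I*z) - 1) * hI

lemma geom_sin (M : ℕ) (a : ℝ) (ha : Real.sin a ≠ 0) :
    ∑ t ∈ Finset.range M, Complex.exp (2*Complex.I*a*t)
      = ((Real.sin (M*a)/Real.sin a : ℝ) : ℂ) * Complex.exp (Complex.I*a*((M:ℂ)-1)) := by
  have hx1 : Complex.exp (2*Complex.I*(a:ℂ)) ≠ 1 := by
    intro h
    rcases Complex.exp_eq_one_iff.mp h with ⟨n, hn⟩
    have h2 : (2:ℂ)*Complex.I*(a:ℂ) = 2*Complex.I*((n:ℂ)*(Real.pi:ℂ)) := by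
      rw [hn]; ring
    have h3 : (a:ℂ) = (n:ℂ)*(Real.pi:ℂ) :=
      mul_left_cancel₀ (by simp [Complex.I_ne_zero] : (2:ℂ)*Complex.I ≠ 0) h2
    have h4 : a = (n:ℝ)*Real.pi := by exact_mod_cast h3
    exact ha (h4 ▸ Real.sin_int_mul_pi n)
  have hgeo := geom_sum_eq hx1 M
  have hterm : ∀ t : ℕ, Complex.exp (2*Complex.I*(a:ℂ)*t) = (Complex.exp (2*Complex.I*(a:ℂ)))^t := by
    intro t
    rw [← Complex.exp_nat_mul]
    ring_nf
  have hnum : (Complex.exp (2*Complex.I*(a:ℂ)))^M - 1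
      = Complex.exp (Complex.I*((M:ℂ)*a)) * (2*Complex.I*Complex.sin ((M:ℂ)*a)) := by
    rw [← Complex.exp_nat_mul]
    have : (M:ℂ)*(2*Complex.I*a) = 2*Complex.I*((M:ℂ)*a) := by ring
    rw [this, exp_two_I_aux]
  have hden : Complex.exp (2*Complex.I*(a:ℂ)) - 1
      = Complex.exp (Complex.I*(a:ℂ)) * (2*Complex.I*Complex.sin (a:ℂ)) := by
    have := exp_two_I_aux (a:ℂ)
    simpa using this
  calc ∑ t ∈ Finset.range M, Complex.exp (2*Complex.I*a*t)
      = ∑ t ∈ Finset.range M, (Complex.exp (2*Complex.I*(a:ℂ)))^t := by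
        exact Finset.sum_congr rfl (fun t _ => hterm t)
    _ = ((Complex.exp (2*Complex.I*(a:ℂ)))^M - 1)/(Complex.exp (2*Complex.I*(a:ℂ)) - 1) := hgeo
    _ = ((Real.sin (M*a)/Real.sin a : ℝ) : ℂ) * Complex.exp (Complex.I*a*((M:ℂ)-1)) := by
        rw [hnum, hden]
        have hexp : Complex.exp (Complex.I*((M:ℂ)*a))
            = Complex.exp (Complex.I*a*((M:ℂ)-1)) * Complex.exp (Complex.I*(a:ℂ)) := by
          rw [← Complex.exp_add]; ring_nf
        rw [hexp]
        have h1 : Complex.exp (Complex.I*(a:ℂ)) ≠ 0 := Complex.exp_ne_zero _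
        have h2' : Complex.sin (a:ℂ) ≠ 0 := by
          rw [← Complex.ofReal_sin]
          exact Complex.ofReal_ne_zero.mpr ha
        push_cast
        field_simp

theorem stmt_8 (N : ℕ) (hN : 2 ≤ N) (γ Δ : ℝ) (hΔ : Δ ∈ Set.Ioo 0 Real.pi)
    (β : ℕ → ℝ)
    (hβ : ∀ t, β t = γ + Δ * (2 * (t : ℝ) - ((N : ℝ) - 1)) / (2 * ((N : ℝ) - 1)))
    (g : ℕ → ℂ) (hg : ∀ t, g t = Complex.exp (Complex.I * ∑ u ∈ Finset.Icc 1 t, β u))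
    (τ : ℕ) (hτ1 : 1 ≤ τ) (hτN : τ ≤ N - 1)
    (hsin : Real.sin (Δ * τ / (2 * ((N : ℝ) - 1))) ≠ 0) :
    (1 / (N : ℂ)) * ∑ t ∈ Finset.range (N - τ), (starRingEnd ℂ) (g t) * g (t + τ)
      = ((Real.sin (Δ * τ * ((N : ℝ) - τ) / (2 * ((N : ℝ) - 1)))
          / ((N : ℝ) * Real.sin (Δ * τ / (2 * ((N : ℝ) - 1))))) : ℂ)
        * Complex.exp (Complex.I * (γ * τ + Δ * τ / (2 * ((N : ℝ) - 1)))) := by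
  have hNR : (2:ℝ) ≤ (N:ℝ) := by exact_mod_cast hN
  have hne : ((N:ℝ) - 1) ≠ 0 := by linarith
  have hN0 : (N:ℝ) ≠ 0 := by positivity
  have hτN' : τ < N := by omega
  set θ : ℝ := Δ * τ / (2 * ((N : ℝ) - 1)) with hθ
  set M : ℕ := N - τ with hM
  have hMcast : (M:ℝ) = (N:ℝ) - τ := by
    rw [hM, Nat.cast_sub hτN'.le]
  set c : ℝ := γ*τ + θ*((τ:ℝ)+2-N) with hc
  -- closed form for partial sums of β
  have hS : ∀ t : ℕ, (∑ u ∈ Finset.Icc 1 t, β u)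
      = γ*t + Δ*((t:ℝ)*(t+1) - t*((N:ℝ)-1))/(2*((N:ℝ)-1)) := by
    intro t
    induction t with
    | zero => simp
    | succ t ih =>
        rw [Finset.sum_Icc_succ_top (by omega : 1 ≤ t+1), ih, hβ]
        push_cast
        field_simp
        ring
  -- each term of the sum
  have hterm : ∀ t : ℕ, (starRingEnd ℂ) (g t) * g (t + τ)
      = Complex.exp (Complex.I*(c:ℝ)) * Complex.exp (2*Complex.I*(θ:ℝ)*t) := by
    intro t
    rw [hg, hg]
    set x : ℝ := ∑ u ∈ Finset.Icc 1 t, β u with hx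
    set y : ℝ := ∑ u ∈ Finset.Icc 1 (t+τ), β u with hy
    have hconj : (starRingEnd ℂ) (Complex.exp (Complex.I * (x:ℂ)))
        = Complex.exp (-(Complex.I * (x:ℂ))) := by
      rw [← Complex.exp_conj]
      congr 1
      simp [map_mul, Complex.conj_I]
    rw [hconj, ← Complex.exp_add, ← Complex.exp_add]
    congr 1
    have hreal : y - x = c + 2*θ*t := by
      rw [hx, hy, hS t, hS (t+τ), hc, hθ]
      push_cast
      field_simp
      ring
    have : -(Complex.I * (x:ℂ)) + Complex.I * (y:ℂ) = Complex.I * (((y - x : ℝ)) : ℂ) := by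
      push_cast; ring
    rw [this, hreal]
    push_cast
    ring
  rw [Finset.sum_congr rfl (fun t _ => hterm t), ← Finset.mul_sum,
    geom_sin M θ (by rw [hθ]; exact hsin)]
  have hexp2 : Complex.exp (Complex.I*(c:ℝ)) * Complex.exp (Complex.I*(θ:ℂ)*((M:ℂ)-1))
      = Complex.exp (Complex.I * ((γ * τ + Δ * τ / (2 * ((N : ℝ) - 1)) : ℝ) : ℂ)) := by
    rw [← Complex.exp_add]
    congr 1
    have hcr : c + θ*((M:ℝ)-1) = γ * τ + Δ * τ / (2 * ((N : ℝ) - 1)) := by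
      rw [hc, hMcast, hθ]
      field_simp
      ring
    calc Complex.I*(c:ℂ) + Complex.I*(θ:ℂ)*((M:ℂ)-1)
        = Complex.I * (((c + θ*((M:ℝ)-1) : ℝ)) : ℂ) := by push_cast; ring
      _ = Complex.I * ((γ * τ + Δ * τ / (2 * ((N : ℝ) - 1)) : ℝ) : ℂ) := by rw [hcr]
  have hsin2 : (M:ℝ)*θ = Δ * τ * ((N : ℝ) - τ) / (2 * ((N : ℝ) - 1)) := by
    rw [hMcast, hθ]; field_simp
  rw [show (1 / (N : ℂ)) * (Complex.exp (Complex.I*(c:ℝ)) *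
      (((Real.sin ((M:ℝ)*θ)/Real.sin θ : ℝ) : ℂ) * Complex.exp (Complex.I*(θ:ℂ)*((M:ℂ)-1))))
      = ((Real.sin ((M:ℝ)*θ)/Real.sin θ : ℝ) : ℂ) * (1 / (N : ℂ)) *
        (Complex.exp (Complex.I*(c:ℝ)) * Complex.exp (Complex.I*(θ:ℂ)*((M:ℂ)-1))) by ring,
    hexp2, hsin2]
  push_cast
  have h2 : ((Real.sin (Δ * τ / (2 * ((N : ℝ) - 1))) : ℝ) : ℂ) ≠ 0 :=
    Complex.ofReal_ne_zero.mpr hsin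
  rw [hθ]
  field_simp
end

section
/- Let μ ≥ 1 be an integer, γ ∈ ℝ, a > 0, and suppose φ : ℕ → ℝ satisfies φ_t = φ_{t mod μ} + γ ⌊t/μ⌋ (mod 2π). Let c_Z : ℤ → ℂ be a sequence with c_Z(τ) = 0 whenever μ does not divide τ. Then the function (t, τ) ↦ a² e^{i(φ_{t+τ} - φ_t)} c_Z(τ) does not depend on t: it equals a² e^{iγτ/μ} c_Z(τ) for all t ≥ 0 and τ ≥ 0 with μ | τ or c_Z(τ)=0. -/
open Complex Real

theorem stmt_16 (μ : ℕ) (hμ : 1 ≤ μ) (γ a : ℝ) (ha : 0 < a)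
    (φ : ℕ → ℝ)
    (hφ : ∀ t : ℕ, ∃ k : ℤ, φ t = φ (t % μ) + γ * (t / μ : ℕ) + 2 * Real.pi * k)
    (cZ : ℤ → ℂ) (hcZ : ∀ τ : ℤ, ¬ ((μ : ℤ) ∣ τ) → cZ τ = 0) :
    ∀ t τ : ℕ,
      ((a : ℂ) ^ 2) * Complex.exp (Complex.I * (φ (t + τ) - φ t)) * cZ (τ : ℤ)
        = ((a : ℂ) ^ 2) * Complex.exp (Complex.I * (γ * τ / μ)) * cZ (τ : ℤ) := by
  intro t τ
  by_cases hd : (μ : ℤ) ∣ (τ : ℤ)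
  · have hμ0 : 0 < μ := hμ
    obtain ⟨m, rfl⟩ := Int.natCast_dvd_natCast.mp hd
    obtain ⟨k₁, h₁⟩ := hφ (t + μ * m)
    obtain ⟨k₂, h₂⟩ := hφ t
    have hmod : (t + μ * m) % μ = t % μ := Nat.add_mul_mod_self_left t μ m
    have hdiv : (t + μ * m) / μ = t / μ + m := by
      rw [Nat.add_mul_div_left _ _ hμ0]
    have hreal : φ (t + μ * m) - φ t = γ * m + 2 * Real.pi * (k₁ - k₂) := by
      rw [h₁, h₂, hmod, hdiv]
      push_cast
      ring
    have hμC : (μ : ℂ) ≠ 0 := Nat.cast_ne_zero.mpr hμ0.ne'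
    have hexp : Complex.exp (Complex.I * ((φ (t + μ * m) : ℂ) - φ t))
        = Complex.exp (Complex.I * (γ * (μ * m : ℕ) / μ)) := by
      have h1 : ((φ (t + μ * m) : ℂ) - φ t)
          = (γ * m : ℝ) + ((k₁ - k₂ : ℤ) : ℂ) * (2 * Real.pi) := by
        rw [← Complex.ofReal_sub, hreal]
        push_cast
        ring
      have h2 : ((γ : ℂ) * (μ * m : ℕ) / μ) = ((γ * m : ℝ) : ℂ) := by
        push_cast
        field_simp
      rw [h1, h2, mul_add, Complex.exp_add]
      have h3 : Complex.I * (((k₁ - k₂ : ℤ) : ℂ) * (2 * Real.pi))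
          = ((k₁ - k₂ : ℤ) : ℂ) * (2 * Real.pi * Complex.I) := by ring
      rw [h3, Complex.exp_int_mul_two_pi_mul_I]
      ring
    rw [hexp]
  · rw [hcZ _ hd, mul_zero, mul_zero]
end
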